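/- The limits χ^{(∞)}_{k,l;b}(q,z) = lim_{N→∞} χ^{(N)}_{k,l;b}(q,z) exist as formal power series in q, z, and the family (χ^{(∞)}_{k,l;b})_b is the unique family of formal power series in q, z satisfying the difference equations χ^{(∞)}_{k,l;(b_0,...,b_{l-2})}(q,z) = Σ_{i=0}^{b_0} z^i · χ^{(∞)}_{k,l;(b_1−i, b_2−i, ..., b_{l-2}−i, k−i)}(q, qz) for all admissible boundary vectors b, together with the initial condition χ^{(∞)}_{k,l;b}(q,0) = 1 for all b. -/

import Mathlib

open Finset Filter MvPowerSeries

noncomputable section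

/-- Formal power series in two variables `q` (index 0) and `z` (index 1). -/
abbrev PS : Type := MvPowerSeries (Fin 2) ℂ

/-- The variable `q`. -/
def Qv : PS := MvPowerSeries.X 0
/-- The variable `z`. -/
def Zv : PS := MvPowerSeries.X 1

/-- Build a power series from its coefficient function. -/
def ofCoeff (c : (Fin 2 →₀ ℕ) → ℂ) : PS := c

/-- The exponent `q^a z^c`. -/
def idx2 (a c : ℕ) : Fin 2 →₀ ℕ := Finsupp.single 0 a + Finsupp.single 1 c

/-- The q-shift operator `(S g)(q,z) = g(q,qz)`. -/
def Sop (f : PS) : PS :=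
  ofCoeff fun e => if e 1 ≤ e 0 then MvPowerSeries.coeff (idx2 (e 0 - e 1) (e 1)) f else 0

/-- The window condition for `(k,l)`-configurations: `x_j + ... + x_{j+l-1} ≤ k`. -/
def windowOK (k l : ℕ) (x : ℕ → ℕ) : Prop := ∀ j, ∑ t ∈ Finset.range l, x (j + t) ≤ k

/-- The boundary condition: `x_0 + ... + x_i ≤ b_i` for `0 ≤ i ≤ l-2`. -/
def boundOK (l : ℕ) (b : ℕ → ℕ) (x : ℕ → ℕ) : Prop :=
  ∀ i, i < l - 1 → ∑ t ∈ Finset.range (i + 1), x t ≤ b i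

/-- Admissible boundary vectors: `b_0 ≤ b_1 ≤ ... ≤ b_{l-2} ≤ k`. -/
def AdmB (k l : ℕ) (b : ℕ → ℕ) : Prop :=
  (∀ i j, i ≤ j → j < l - 1 → b i ≤ b j) ∧ ∀ i, i < l - 1 → b i ≤ k

/-- The character `χ^{(N)}_{k,l;b}(q,z)`: the coefficient of `q^a z^m` counts
`(k,l)`-configurations of length at most `N` obeying the boundary conditions,
with `Σ j·x_j = a` and `Σ x_j = m`. -/
def chiN (k l N : ℕ) (b : ℕ → ℕ) : PS :=
  ofCoeff fun e => (Nat.card {x : ℕ → ℕ //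
    windowOK k l x ∧ boundOK l b x ∧ (∀ i, N ≤ i → x i = 0) ∧
    ∑ j ∈ Finset.range N, j * x j = e 0 ∧ ∑ j ∈ Finset.range N, x j = e 1} : ℂ)

/-- The limit character `χ^{(∞)}_{k,l;b}(q,z)`. -/
def chiInf (k l : ℕ) (b : ℕ → ℕ) : PS :=
  ofCoeff fun e => (Nat.card {x : ℕ → ℕ //
    windowOK k l x ∧ boundOK l b x ∧ (∀ i, e 0 + 1 ≤ i → x i = 0) ∧
    ∑ j ∈ Finset.range (e 0 + 1), j * x j = e 0 ∧
    ∑ j ∈ Finset.range (e 0 + 1), x j = e 1} : ℂ)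

/-- The shifted boundary vector `(b_1 - i, ..., b_{l-2} - i, k - i)`. -/
def shiftB (k l : ℕ) (b : ℕ → ℕ) (i : ℕ) : ℕ → ℕ :=
  fun j => if j + 1 ≤ l - 2 then b (j + 1) - i else k - i

/-- The monomial `q^{p.1} z^{p.2}`. -/
def monoPS (p : ℕ × ℕ) : PS := Qv ^ p.1 * Zv ^ p.2

/-- Exponents in the bracket `[P_1,...,P_l] = P_1^{b_0} P_2^{b_1-b_0} ⋯ P_l^{k-b_{l-2}}`. -/
def bexp (l k : ℕ) (b : ℕ → ℕ) (i : ℕ) : ℕ :=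
  if i = 0 then b 0 else if i = l - 1 then k - b (l - 2) else b i - b (i - 1)

/-- The bracket `[P_1,...,P_l]` as a function of the boundary vector `b`. -/
def bracket (l k : ℕ) (P : ℕ → ℕ × ℕ) (b : ℕ → ℕ) : PS :=
  ∏ i ∈ Finset.range l, monoPS (P i) ^ bexp l k b i

/-- q-exponent pattern of the tuples in the list defining `V_l`
(`r` of the entries carry a factor `z`; `c 0 = 0`). -/
def patQ (l r : ℕ) (c : ℕ → ℕ) (j : ℕ) : ℕ := if j < r then c (l - r + j) else c (j - r)

/-- z-exponent pattern of the tuples in the list defining `V_l`. -/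
def patZ (r j : ℕ) : ℕ := if j < r then 1 else 0

/-- The tuples `(P_1,...,P_l)` appearing in the definition of `V_l`, namely
`q^{mk} z^{nk}[q^{c_{l-r}}z, …, q^{c_{l-1}}z, 1, q^{c_1}, …, q^{c_{l-1-r}}]`
with the common factor `q^m z^n` distributed over the entries. -/
def SimpleTuple (l : ℕ) (P : ℕ → ℕ × ℕ) : Prop :=
  ∃ m n r : ℕ, r < l ∧ ∃ c : ℕ → ℕ, c 0 = 0 ∧ Monotone c ∧
    ∀ j, j < l → P j = (m + patQ l r c j, n + patZ r j)

/-- Admissible boundary data. -/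
def Adm (k l : ℕ) : Type := {b : ℕ → ℕ // AdmB k l b}

/-- The ambient space of functions of `b` with values in power series; `V_l` is a
subspace of it. -/
abbrev VV (k l : ℕ) : Type := Adm k l → PS

/-- The simple vector `f(q,z)·[P_1,...,P_l]`. -/
def simpleVal (k l : ℕ) (f : PS) (P : ℕ → ℕ × ℕ) : VV k l := fun b => f * bracket l k P b.val

/-- The space `V_l`, spanned by simple vectors. -/
def Vspan (k l : ℕ) : Submodule ℂ (VV k l) :=
  Submodule.span ℂ {v | ∃ f P, SimpleTuple l P ∧ v = simpleVal k l f P}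

/-- Power series expansion of `1/(1 - q^{w.1} z^{w.2})` where `w` may have negative
exponents, in which case `1/(1-u) = -Σ_{n≥1} u^{-n}` is used. -/
def geomPS : ℤ × ℤ → PS := fun w =>
  if 0 ≤ w.1 ∧ 0 ≤ w.2 then
    ofCoeff fun e => ({n : ℕ | (n : ℤ) * w.1 = (e 0 : ℤ) ∧ (n : ℤ) * w.2 = (e 1 : ℤ)}.ncard : ℂ)
  else
    ofCoeff fun e =>
      -({n : ℕ | 0 < n ∧ (n : ℤ) * w.1 = -(e 0 : ℤ) ∧ (n : ℤ) * w.2 = -(e 1 : ℤ)}.ncard : ℂ)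

/-- Exponents of `S(q^{-1} z P_l / P_1)`. -/
def wExpA (l : ℕ) (P : ℕ → ℕ × ℕ) : ℤ × ℤ :=
  (((P (l-1)).1 : ℤ) + ((P (l-1)).2 : ℤ) - ((P 0).1 : ℤ) - ((P 0).2 : ℤ),
   ((P (l-1)).2 : ℤ) + 1 - ((P 0).2 : ℤ))

/-- The q-shift of a monomial: `S(q^e z^d) = q^{e+d} z^d`. -/
def Smono (p : ℕ × ℕ) : ℕ × ℕ := (p.1 + p.2, p.2)

/-- The tuple `(S P_1, S P_1, S P_2, ..., S P_{l-1})` produced by the operator `A`. -/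
def tupA (P : ℕ → ℕ × ℕ) : ℕ → ℕ × ℕ := fun j => if j = 0 then Smono (P 0) else Smono (P (j - 1))

/-- The tuple `(S(q^{-1} z P_l), S P_1, ..., S P_{l-1})` produced by the operator `B`. -/
def tupB (l : ℕ) (P : ℕ → ℕ × ℕ) : ℕ → ℕ × ℕ :=
  fun j => if j = 0 then ((P (l-1)).1 + (P (l-1)).2, (P (l-1)).2 + 1) else Smono (P (j - 1))

/-- Defining property of the operator `A`:
`A(f[P_1,…,P_l]) = S(f/(1 - q^{-1}zP_l/P_1)·[P_1,P_1,P_2,…,P_{l-1}])`. -/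
def HypA (k l : ℕ) (A : Module.End ℂ (VV k l)) : Prop :=
  ∀ f P, SimpleTuple l P →
    A (simpleVal k l f P) = simpleVal k l (Sop f * geomPS (wExpA l P)) (tupA P)

/-- Defining property of the operator `B`:
`B(f[P_1,…,P_l]) = S(f/(1 - q z^{-1}P_1/P_l)·[q^{-1}zP_l,P_1,…,P_{l-1}])`. -/
def HypB (k l : ℕ) (B : Module.End ℂ (VV k l)) : Prop :=
  ∀ f P, SimpleTuple l P →
    B (simpleVal k l f P) =
      simpleVal k l (Sop f * geomPS (-(wExpA l P).1, -(wExpA l P).2)) (tupB l P)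

/-- The vector `v_ini = [1,...,1]`. -/
def vini (k l : ℕ) : VV k l := simpleVal k l 1 (fun _ => (0, 0))

/-- `(z)_n = Π_{i=0}^{n-1} (1 - q^i z)`. -/
def pochZ (n : ℕ) : PS := ∏ i ∈ Finset.range n, (1 - Qv ^ i * Zv)
/-- `(q)_t = Π_{i=1}^{t} (1 - q^i)`. -/
def pochQ (t : ℕ) : PS := ∏ i ∈ Finset.range t, (1 - Qv ^ (i + 1))
/-- `(q^t z)_∞ = Π_{i≥0} (1 - q^{t+i} z)`, defined coefficientwise. -/
def pochInfQZ (t : ℕ) : PS :=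
  ofCoeff fun e =>
    MvPowerSeries.coeff e (∏ i ∈ Finset.range (e 0 + 1), (1 - Qv ^ (t + i) * Zv))
/-- `(z)_∞ = Π_{i≥0} (1 - q^i z)`. -/
def pochInfZ : PS := pochInfQZ 0

/-- The vector `v_∞ = [1,...,1]/(z)_∞`. -/
def vinf (k l : ℕ) : VV k l := simpleVal k l pochInfZ⁻¹ (fun _ => (0, 0))

/-- Application of a monomial (word) in the operators `A` (letter `true`) and
`B` (letter `false`) to a vector; the leftmost letter acts last read, i.e.
`C_1 C_2 ⋯ C_m v = C_1 (C_2 (⋯ (C_m v)))`. -/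
def wact (k l : ℕ) (A B : Module.End ℂ (VV k l)) (w : List Bool) (v : VV k l) : VV k l :=
  w.foldr (fun c u => if c then A u else B u) v

/-- A good monomial: `C_i = A` implies `C_{i+l-1} = A` (letters 0-indexed, `true = A`). -/
def GoodWord (l : ℕ) (w : List Bool) : Prop :=
  ∀ i, i + (l - 1) < w.length → w.getD i true = true → w.getD (i + (l - 1)) true = true

/-- Canonical representative of an equivalence class of monomials: no trailing `A`s. -/
def Reduced (w : List Bool) : Prop := w = [] ∨ w.getLast? = some false

/-- Symbols for marked vertices: `•`, `∘`, `×`. -/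
inductive MSym : Type
  | dot | circ | mark
  deriving DecidableEq

/-- The `A`-arrow on (possibly marked) vertices. -/
def stepA : List MSym → List MSym
  | MSym.circ :: J => J ++ [MSym.circ]
  | MSym.dot :: _ :: J => MSym.dot :: (J ++ [MSym.circ])
  | MSym.mark :: MSym.dot :: J => MSym.dot :: (J ++ [MSym.circ])
  | MSym.mark :: MSym.circ :: J => MSym.mark :: (J ++ [MSym.circ])
  | MSym.mark :: MSym.mark :: J => MSym.dot :: (J ++ [MSym.circ])
  | v => v

/-- The `B`-arrow on (possibly marked) vertices: rotation. -/
def stepB : List MSym → List MSym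
  | [] => []
  | x :: J => J ++ [x]

/-- The marked path of the monomial `w` (extended by `A`s at positions beyond its
length), starting from `[•,…,•,×]`; `mstate l w t` is the vertex after `t` arrows. -/
def mstate (l : ℕ) (w : List Bool) : ℕ → List MSym
  | 0 => List.replicate (l - 1) MSym.dot ++ [MSym.mark]
  | t + 1 => (if w.getD t true then stepA else stepB) (mstate l w t)

/-- The `t`-th vertex of the marked path has the form `[× • J]`, i.e. the `t`-th
arrow is of type (i) or (ii). -/
def CSrc (l : ℕ) (w : List Bool) (t : ℕ) : Prop :=
  (mstate l w t).getD 0 MSym.circ = MSym.mark ∧ (mstate l w t).getD 1 MSym.circ = MSym.dot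

/-- `(N A K, N B K)` is a cancellation pair: `N A K` is good and the displayed `A`
is its cancellation `A`-arrow (the last arrow of type (i) or (ii)). -/
def CancelPair (l : ℕ) (N K : List Bool) : Prop :=
  GoodWord l (N ++ true :: K) ∧ CSrc l (N ++ true :: K) N.length ∧
    ∀ t, N.length < t → ¬ CSrc l (N ++ true :: K) t

/-- `w` is good and has a cancellation `A`-arrow. -/
def HasCA (l : ℕ) (w : List Bool) : Prop :=
  GoodWord l w ∧ ∃ t, w.getD t true = true ∧ CSrc l w t ∧ ∀ t', t < t' → ¬ CSrc l w t'

/-- `w` is good and has a cancellation `B`-arrow. -/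
def HasCB (l : ℕ) (w : List Bool) : Prop :=
  GoodWord l w ∧ ∃ t, w.getD t true = false ∧ CSrc l w t ∧ ∀ t', t < t' → ¬ CSrc l w t'

/-- The index of the cancellation arrow. -/
def cancelIdx (l : ℕ) (w : List Bool) : ℕ :=
  sInf {t | CSrc l w t ∧ ∀ t', t < t' → ¬ CSrc l w t'}

/-- Flip the letter at the cancellation arrow. -/
def flipCancel (l : ℕ) (w : List Bool) : List Bool :=
  (w ++ List.replicate (cancelIdx l w + 1 - w.length) true).set (cancelIdx l w) false

/-- The lattice `Λ` is `ℕ → ℤ` supported on `{0,…,l-1}`; coordinates `0,…,l-2`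
are the generators `b_0,…,b_{l-2}` and coordinate `l-1` is the generator `k`.
`Ma` is the map `M_a`: `b_i ↦ b_{i+1}` (`i ≤ l-3`), `b_{l-2} ↦ k`, `k ↦ k`. -/
def Ma (l : ℕ) (v : ℕ → ℤ) : ℕ → ℤ := fun j =>
  if j = 0 then 0
  else if j = l - 1 then v (l - 2) + v (l - 1)
  else if j < l - 1 then v (j - 1)
  else 0

/-- The map `M_b`: `b_i ↦ b_{i+1} - b_0` (`i ≤ l-3`), `b_{l-2} ↦ k - b_0`, `k ↦ k`. -/
def Mb (l : ℕ) (v : ℕ → ℤ) : ℕ → ℤ := fun j =>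
  if j = 0 then -(∑ i ∈ Finset.range (l - 1), v i)
  else if j = l - 1 then v (l - 2) + v (l - 1)
  else if j < l - 1 then v (j - 1)
  else 0

/-- The representative `ī ∈ {1,…,l}` of `i` modulo `l`. -/
def ibar (l : ℕ) (i : ℤ) : ℕ := ((i - 1) % (l : ℤ)).toNat + 1

/-- `ι_{i,j} = b_{ī-2} - b_{j̄-2} + k·δ(ī ≤ j̄)` (with `b_{-1} = 0`). -/
def iotaL (l : ℕ) (i j : ℤ) : ℕ → ℤ := fun t =>
  (if 2 ≤ ibar l i ∧ t = ibar l i - 2 then 1 else 0)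
  - (if 2 ≤ ibar l j ∧ t = ibar l j - 2 then 1 else 0)
  + (if ibar l i ≤ ibar l j ∧ t = l - 1 then 1 else 0)

/-- `M_{c_1} ∘ ⋯ ∘ M_{c_m}` applied to `v`, where `c_i = a` if the `i`-th letter is
`A` (`true`) and `c_i = b` otherwise. -/
def applyWord (l : ℕ) (w : List Bool) (v : ℕ → ℤ) : ℕ → ℤ :=
  w.foldr (fun c u => if c then Ma l u else Mb l u) v

/-- The extremal configuration of the monomial `w`:
`x_i = 0` if `C_{i+1} = A` and `x_i = M_{c_1} ∘ ⋯ ∘ M_{c_i}(b_0)` if `C_{i+1} = B`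
(entries beyond the length of `w` are `0`, matching equivalence of configurations). -/
def xconf (l : ℕ) (w : List Bool) (i : ℕ) : ℕ → ℤ :=
  if w.getD i true = true then 0 else applyWord l (w.take i) (iotaL l 2 1)

/-- The `A`-arrow of the summation graph (vertices as arrays of `•` = `true`,
`∘` = `false`). -/
def vstepA : List Bool → List Bool
  | false :: J => J ++ [false]
  | true :: _ :: J => true :: (J ++ [false])
  | v => v

/-- The `B`-arrow of the summation graph: rotation. -/
def vstepB : List Bool → List Bool
  | [] => []
  | x :: J => J ++ [x]

/-- The path associated with `w` in the summation graph, starting from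
`I_top = [•,…,•]`; `vstate l w t` is the vertex `I^{(t)}`. -/
def vstate (l : ℕ) (w : List Bool) (t : ℕ) : List Bool :=
  (w.take t).foldl (fun v c => if c then vstepA v else vstepB v) (List.replicate l true)

/-- The evolution of the vector part of a simple vector under one operator. -/
def tupStep (l : ℕ) (c : Bool) (P : ℕ → ℕ × ℕ) : ℕ → ℕ × ℕ :=
  if c then tupA P else tupB l P

/-- The vector part of `M v_∞` for a word `M`. -/
def wordTuple (l : ℕ) : List Bool → ℕ → ℕ × ℕ
  | [] => fun _ => (0, 0)
  | c :: w => tupStep l c (wordTuple l w)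

/-- The scalar part of `M v_∞` for a word `M`. -/
def wordScalar (l : ℕ) : List Bool → PS
  | [] => pochInfZ⁻¹
  | c :: w =>
      Sop (wordScalar l w) *
        (if c then geomPS (wExpA l (wordTuple l w))
         else geomPS (-(wExpA l (wordTuple l w)).1, -(wExpA l (wordTuple l w)).2))

/-- A cancellation block `𝔹_s = C_1 ⋯ C_{l+s}` with `C_1 = C_{s+2} = C_l = B`,
`C_2 = ⋯ = C_{s+1} = A`, `C_{l+1} = ⋯ = C_{l+s} = A` (0-indexed positions). -/
def IsBlock (l s : ℕ) (w : List Bool) : Prop :=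
  s ≤ l - 2 ∧ w.length = l + s ∧
  w.getD 0 true = false ∧ w.getD (s + 1) true = false ∧ w.getD (l - 1) true = false ∧
  (∀ i, 1 ≤ i → i ≤ s → w.getD i true = true) ∧
  (∀ i, l ≤ i → i < l + s → w.getD i true = true)

/-- The block `𝔼_i = C_2 ⋯ C_l` where `C_j = B` iff `j ∈ {σ(1),…,σ(i)}`
(1-based values of the permutation; `true = A`, `false = B`). -/
def Eblock (l : ℕ) (σ : Equiv.Perm (Fin l)) (i : ℕ) : List Bool :=
  (List.range (l - 1)).map fun t => decide (∀ a : Fin l, (a : ℕ) < i → (σ a : ℕ) ≠ t + 1)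

/-- The word `𝔼_{l-2}^{n_{l-2}} ⋯ 𝔼_1^{n_1}`. -/
def coreWord (l : ℕ) (σ : Equiv.Perm (Fin l)) (n : ℕ → ℤ) : List Bool :=
  (((List.range (l - 2)).reverse.map fun i' =>
    (List.replicate (n (i' + 1)).toNat (Eblock l σ (i' + 1))).flatten)).flatten

/-- The word `B^{n_{l-1}} 𝔼_{l-2}^{n_{l-2}} ⋯ 𝔼_1^{n_1}`; for `n_{l-1} < 0` the
first `-n_{l-1}` letters (which are `B`s) are removed instead. -/
def theWord (l : ℕ) (σ : Equiv.Perm (Fin l)) (n : ℕ → ℤ) : List Bool :=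
  if 0 ≤ n (l - 1) then List.replicate (n (l - 1)).toNat false ++ coreWord l σ n
  else (coreWord l σ n).drop (-(n (l - 1))).toNat

/-- `σ(1) = l` and `σ(l) = 1` (in 1-based notation). -/
def SigmaCond (l : ℕ) (σ : Equiv.Perm (Fin l)) : Prop :=
  (∀ a : Fin l, (a : ℕ) = 0 → (σ a : ℕ) = l - 1) ∧
  (∀ a : Fin l, (a : ℕ) = l - 1 → (σ a : ℕ) = 0)

/-- The conditions on `n = (n_1,…,n_{l-1})`: `n_i ≥ 0` for `i ≤ l-2`,
`n_{l-1} ≥ 2 - σ(l-1)`, `n_i > 0` whenever `σ(i) < σ(i+1)`; the unused entries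
are normalized to `0`. -/
def NCond (l : ℕ) (σ : Equiv.Perm (Fin l)) (n : ℕ → ℤ) : Prop :=
  (∀ i, 1 ≤ i → i ≤ l - 2 → 0 ≤ n i) ∧
  (∀ a : Fin l, (a : ℕ) = l - 2 → (2 : ℤ) - (((σ a : ℕ) : ℤ) + 1) ≤ n (l - 1)) ∧
  (∀ i, 1 ≤ i → i ≤ l - 1 → ∀ a b : Fin l, (a : ℕ) = i - 1 → (b : ℕ) = i →
      (σ a : ℕ) < (σ b : ℕ) → 0 < n i) ∧
  (∀ i, i = 0 ∨ l - 1 < i → n i = 0)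

end

noncomputable section

def Pred (k l : ℕ) (b : ℕ → ℕ) (N a m : ℕ) (x : ℕ → ℕ) : Prop :=
  windowOK k l x ∧ boundOK l b x ∧ (∀ i, N ≤ i → x i = 0) ∧
    (∑ j ∈ Finset.range N, j * x j = a) ∧ ∑ j ∈ Finset.range N, x j = m

def cnt (k l : ℕ) (b : ℕ → ℕ) (N a m : ℕ) : ℕ := Nat.card {x : ℕ → ℕ // Pred k l b N a m x}

lemma coeff_ofCoeff (c : (Fin 2 →₀ ℕ) → ℂ) (e : Fin 2 →₀ ℕ) :
    MvPowerSeries.coeff e (ofCoeff c) = c e := rfl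

lemma chiN_coeff (k l N : ℕ) (b : ℕ → ℕ) (e : Fin 2 →₀ ℕ) :
    MvPowerSeries.coeff e (chiN k l N b) = (cnt k l b N (e 0) (e 1) : ℂ) := rfl

lemma chiInf_coeff (k l : ℕ) (b : ℕ → ℕ) (e : Fin 2 →₀ ℕ) :
    MvPowerSeries.coeff e (chiInf k l b) = (cnt k l b (e 0 + 1) (e 0) (e 1) : ℂ) := rfl

lemma idx2_apply0 (a c : ℕ) : idx2 a c 0 = a := by
  simp [idx2, Finsupp.single_apply]

lemma idx2_apply1 (a c : ℕ) : idx2 a c 1 = c := by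
  simp [idx2, Finsupp.single_apply]

lemma idx2_eta (e : Fin 2 →₀ ℕ) : idx2 (e 0) (e 1) = e := by
  ext t
  fin_cases t <;> simp [idx2, Finsupp.single_apply]

lemma sum_cut (g : ℕ → ℕ → ℕ) (hg : ∀ t, g t 0 = 0) {x : ℕ → ℕ} {N M : ℕ}
    (hx : ∀ j, N ≤ j → x j = 0) (hNM : N ≤ M) :
    ∑ t ∈ Finset.range M, g t (x t) = ∑ t ∈ Finset.range N, g t (x t) := by
  refine (Finset.sum_subset (Finset.range_subset_range.2 hNM) ?_).symm
  intro t _ ht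
  rw [Finset.mem_range, not_lt] at ht
  rw [hx t ht, hg]
lemma pred_finite (k l : ℕ) (b : ℕ → ℕ) (N a m : ℕ) : Finite {x : ℕ → ℕ // Pred k l b N a m x} := by
  have hbd : ∀ (y : {x : ℕ → ℕ // Pred k l b N a m x}) (j : Fin N), y.1 j < m + 1 := by
    intro y j
    have h2 := y.2.2.2.2.2
    have : y.1 (j : ℕ) ≤ ∑ t ∈ Finset.range N, y.1 t :=
      Finset.single_le_sum (f := fun t => y.1 t) (fun t _ => Nat.zero_le _)
        (Finset.mem_range.2 j.2)
    omega
  refine Finite.of_injective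
    (fun y : {x : ℕ → ℕ // Pred k l b N a m x} =>
      (fun j : Fin N => (⟨y.1 j, hbd y j⟩ : Fin (m + 1)))) ?_
  intro y z h
  apply Subtype.ext; funext j
  by_cases hj : j < N
  · have := congrFun h ⟨j, hj⟩
    simpa using congrArg Fin.val this
  · rw [y.2.2.2.1 j (le_of_not_gt hj), z.2.2.2.1 j (le_of_not_gt hj)]

lemma nat_card_sigma {ι : Type} [Fintype ι] (f : ι → Type) [∀ i, Finite (f i)] :
    Nat.card ((i : ι) × f i) = ∑ i, Nat.card (f i) := by
  letI : ∀ i, Fintype (f i) := fun i => Fintype.ofFinite _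
  simp [Nat.card_eq_fintype_card]

lemma card_partition (P : (ℕ → ℕ) → Prop) (hfin : Finite {x // P x}) (B : ℕ)
    (hB : ∀ x, P x → x 0 < B) :
    Nat.card {x // P x} = ∑ i ∈ Finset.range B, Nat.card {x // P x ∧ x 0 = i} := by
  classical
  haveI := hfin
  have e1 : {x // P x} ≃ (i : Fin B) × {y : {x // P x} // y.1 0 = (i : ℕ)} := by
    refine (Equiv.sigmaFiberEquiv
      (fun y : {x // P x} => (⟨y.1 0, hB _ y.2⟩ : Fin B))).symm.trans ?_
    exact Equiv.sigmaCongrRight fun i => Equiv.subtypeEquivRight fun y => by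
      simp [Fin.ext_iff]
  rw [Nat.card_congr e1, nat_card_sigma]
  rw [Fin.sum_univ_eq_sum_range (fun i => Nat.card {y : {x // P x} // y.1 0 = i}) B]
  exact Finset.sum_congr rfl fun i _ =>
    Nat.card_congr (Equiv.subtypeSubtypeEquivSubtypeInter P (fun x => x 0 = i))
lemma mem_facts {k l : ℕ} {b : ℕ → ℕ} {a m : ℕ} {x : ℕ → ℕ} (h : Pred k l b (a+1) a m x) :
    x 0 ≤ m ∧ (∑ j ∈ Finset.range a, x (j+1)) = m - x 0 ∧
      (∑ j ∈ Finset.range a, j * x (j+1)) = a - (m - x 0) ∧ m - x 0 ≤ a := by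
  obtain ⟨hw, hbk, hs, h1, h2⟩ := h
  have e2 : ∑ t ∈ Finset.range (a+1), x t = (∑ j ∈ Finset.range a, x (j+1)) + x 0 :=
    Finset.sum_range_succ' x a
  have e1 : ∑ t ∈ Finset.range (a+1), t * x t = ∑ j ∈ Finset.range a, (j+1) * x (j+1) := by
    rw [Finset.sum_range_succ' (fun t => t * x t) a]; simp
  have e3 : ∑ j ∈ Finset.range a, (j+1) * x (j+1)
      = (∑ j ∈ Finset.range a, j * x (j+1)) + ∑ j ∈ Finset.range a, x (j+1) := by
    rw [← Finset.sum_add_distrib]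
    exact Finset.sum_congr rfl fun j _ => by ring
  rw [e2] at h2
  rw [e1, e3] at h1
  omega

lemma supp_of_small {a : ℕ} {x' : ℕ → ℕ} {s1 : ℕ}
    (hsum : ∑ j ∈ Finset.range a, j * x' j = s1) :
    ∀ j, s1 + 1 ≤ j → j < a → x' j = 0 := by
  intro j hj hja
  by_contra hne
  have h1 : j ≤ j * x' j := Nat.le_mul_of_pos_right j (Nat.pos_of_ne_zero hne)
  have h2 : j * x' j ≤ ∑ t ∈ Finset.range a, t * x' t :=
    Finset.single_le_sum (f := fun t => t * x' t) (fun t _ => Nat.zero_le _)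
      (Finset.mem_range.2 hja)
  omega

lemma fwd_mem {k l : ℕ} (hl : 2 ≤ l) {b : ℕ → ℕ} (hb : AdmB k l b) {a m : ℕ} {x : ℕ → ℕ}
    (h : Pred k l b (a+1) a m x) :
    Pred k l (shiftB k l b (x 0)) (a - (m - x 0) + 1) (a - (m - x 0)) (m - x 0)
      (fun j => x (j+1)) := by
  obtain ⟨him, hs2, hs1, hma⟩ := mem_facts h
  obtain ⟨hw, hbk, hs, h1, h2⟩ := h
  set i := x 0 with hi
  set x' : ℕ → ℕ := fun j => x (j+1) with hx'
  set a' := a - (m - i) with ha'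
  set m' := m - i with hm'
  -- support of x' beyond a
  have hsa : ∀ j, a ≤ j → x' j = 0 := fun j hj => hs (j+1) (by omega)
  -- support of x' beyond a'
  have hsupp : ∀ j, a' + 1 ≤ j → x' j = 0 := by
    intro j hj
    by_cases hja : j < a
    · exact supp_of_small hs1 j hj hja
    · exact hsa j (by omega)
  refine ⟨?_, ?_, hsupp, ?_, ?_⟩
  · -- windowOK
    intro j
    have : ∀ t, x' (j + t) = x (j + 1 + t) := by
      intro t; show x (j + t + 1) = x (j + 1 + t); congr 1; omega
    calc ∑ t ∈ Finset.range l, x' (j + t) = ∑ t ∈ Finset.range l, x (j + 1 + t) :=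
          Finset.sum_congr rfl fun t _ => this t
      _ ≤ k := hw (j+1)
  · -- boundOK
    intro j hj
    have key : (∑ t ∈ Finset.range (j+1+1), x t) = (∑ t ∈ Finset.range (j+1), x' t) + i :=
      Finset.sum_range_succ' x (j+1)
    simp only [shiftB]
    by_cases hcase : j + 1 ≤ l - 2
    · rw [if_pos hcase]
      have hlt : j + 1 < l - 1 := by omega
      have := hbk (j+1) hlt
      omega
    · rw [if_neg hcase]
      have hj2 : j + 1 + 1 = l := by omega
      have hw0 := hw 0
      simp only [zero_add] at hw0
      rw [← hj2] at hw0
      omega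
  · -- q-sum
    have c1 : ∑ t ∈ Finset.range (a'+1+a), t * x' t = ∑ t ∈ Finset.range (a'+1), t * x' t :=
      sum_cut (fun t u => t * u) (fun t => by ring) hsupp (by omega)
    have c2 : ∑ t ∈ Finset.range (a'+1+a), t * x' t = ∑ t ∈ Finset.range a, t * x' t :=
      sum_cut (fun t u => t * u) (fun t => by ring) hsa (by omega)
    rw [← c1, c2]
    exact hs1
  · -- z-sum
    have c1 : ∑ t ∈ Finset.range (a'+1+a), x' t = ∑ t ∈ Finset.range (a'+1), x' t :=
      sum_cut (fun _ u => u) (fun _ => rfl) hsupp (by omega)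
    have c2 : ∑ t ∈ Finset.range (a'+1+a), x' t = ∑ t ∈ Finset.range a, x' t :=
      sum_cut (fun _ u => u) (fun _ => rfl) hsa (by omega)
    rw [← c1, c2]
    exact hs2
lemma bwd_mem {k l : ℕ} (hl : 2 ≤ l) {b : ℕ → ℕ} (hb : AdmB k l b) {a m i : ℕ} {x' : ℕ → ℕ}
    (hi : i ≤ b 0) (him : i ≤ m) (hma : m - i ≤ a)
    (h : Pred k l (shiftB k l b i) (a - (m - i) + 1) (a - (m - i)) (m - i) x') :
    Pred k l b (a+1) a m (fun j => Nat.casesOn j i (fun j' => x' j')) := by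
  obtain ⟨hw', hbd', hs', h1', h2'⟩ := h
  set a' := a - (m - i) with ha'
  set m' := m - i with hm'
  set x : ℕ → ℕ := fun j => Nat.casesOn j i (fun j' => x' j') with hxdef
  have hx0 : x 0 = i := rfl
  have hxs : ∀ j, x (j+1) = x' j := fun j => rfl
  have haam : a' + m' = a := by omega
  -- support of x' beyond a
  have hsupA : ∀ j, a ≤ j → x' j = 0 := by
    intro j hj
    by_cases hc : a' + 1 ≤ j
    · exact hs' j hc
    · -- j ≤ a', a ≤ j, a' ≤ a forces j = a' = a, m' = 0
      have hja : j = a' := by omega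
      have hm0 : m' = 0 := by omega
      have : x' j ≤ ∑ t ∈ Finset.range (a'+1), x' t :=
        Finset.single_le_sum (f := fun t => x' t) (fun t _ => Nat.zero_le _)
          (Finset.mem_range.2 (by omega))
      omega
  have c1 : ∑ t ∈ Finset.range (a'+1+a), t * x' t = ∑ t ∈ Finset.range (a'+1), t * x' t :=
    sum_cut (fun t u => t * u) (fun t => by ring) hs' (by omega)
  have c2 : ∑ t ∈ Finset.range (a'+1+a), t * x' t = ∑ t ∈ Finset.range a, t * x' t :=
    sum_cut (fun t u => t * u) (fun t => by ring) hsupA (by omega)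
  have d1 : ∑ t ∈ Finset.range (a'+1+a), x' t = ∑ t ∈ Finset.range (a'+1), x' t :=
    sum_cut (fun _ u => u) (fun _ => rfl) hs' (by omega)
  have d2 : ∑ t ∈ Finset.range (a'+1+a), x' t = ∑ t ∈ Finset.range a, x' t :=
    sum_cut (fun _ u => u) (fun _ => rfl) hsupA (by omega)
  have hsum1 : ∑ t ∈ Finset.range a, t * x' t = a' := by rw [← c2, c1]; exact h1'
  have hsum2 : ∑ t ∈ Finset.range a, x' t = m' := by rw [← d2, d1]; exact h2'
  refine ⟨?_, ?_, ?_, ?_, ?_⟩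
  · -- windowOK
    intro j
    cases j with
    | zero =>
      have e0 : ∑ t ∈ Finset.range l, x (0 + t) = ∑ t ∈ Finset.range l, x t := by
        refine Finset.sum_congr rfl fun t _ => ?_
        rw [Nat.zero_add]
      rw [e0, show l = (l-1)+1 by omega, Finset.sum_range_succ' x (l-1)]
      have hb1 := hbd' (l-2) (by omega)
      have hsb : shiftB k l b i (l-2) = k - i := by
        simp only [shiftB]
        rw [if_neg (by omega)]
      rw [hsb] at hb1
      have hik : i ≤ k := le_trans hi (hb.2 0 (by omega))
      have e1 : ∑ t ∈ Finset.range (l-1), x (t+1) = ∑ t ∈ Finset.range (l-1), x' t :=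
        Finset.sum_congr rfl fun t _ => hxs t
      rw [e1, hx0]
      have e2 : ∑ t ∈ Finset.range ((l-2)+1), x' t = ∑ t ∈ Finset.range (l-1), x' t := by
        rw [show l - 2 + 1 = l - 1 by omega]
      rw [e2] at hb1
      omega
    | succ j' =>
      have e0 : ∀ t, x (j' + 1 + t) = x' (j' + t) := by
        intro t
        have : j' + 1 + t = (j' + t) + 1 := by omega
        rw [this, hxs]
      calc ∑ t ∈ Finset.range l, x (j' + 1 + t) = ∑ t ∈ Finset.range l, x' (j' + t) :=
            Finset.sum_congr rfl fun t _ => e0 t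
        _ ≤ k := hw' j'
  · -- boundOK
    intro j hj
    cases j with
    | zero =>
      rw [Finset.sum_range_one, hx0]
      exact hi
    | succ j' =>
      have key : (∑ t ∈ Finset.range (j'+1+1), x t) = (∑ t ∈ Finset.range (j'+1), x' t) + i := by
        rw [Finset.sum_range_succ' x (j'+1), hx0]
      have hb1 := hbd' j' (by omega)
      have hsb : shiftB k l b i j' = b (j'+1) - i := by
        simp only [shiftB]
        rw [if_pos (by omega)]
      rw [hsb] at hb1
      have hmono : b 0 ≤ b (j'+1) := hb.1 0 (j'+1) (Nat.zero_le _) hj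
      omega
  · -- support
    intro j hj
    cases j with
    | zero => omega
    | succ j' => exact hxs j' ▸ hsupA j' (by omega)
  · -- q-sum
    have e1 : ∑ t ∈ Finset.range (a+1), t * x t = ∑ j ∈ Finset.range a, (j+1) * x' j := by
      rw [Finset.sum_range_succ' (fun t => t * x t) a]
      simp only [Nat.zero_mul, add_zero]
      rfl
    have e2 : ∑ j ∈ Finset.range a, (j+1) * x' j
        = (∑ j ∈ Finset.range a, j * x' j) + ∑ j ∈ Finset.range a, x' j := by
      rw [← Finset.sum_add_distrib]
      exact Finset.sum_congr rfl fun j _ => by ring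
    rw [e1, e2, hsum1, hsum2]
    omega
  · -- z-sum
    have e1 : ∑ t ∈ Finset.range (a+1), x t = (∑ j ∈ Finset.range a, x' j) + i := by
      rw [Finset.sum_range_succ' x a, hx0]
    rw [e1, hsum2]
    omega
lemma fiber_card {k l : ℕ} (hl : 2 ≤ l) {b : ℕ → ℕ} (hb : AdmB k l b) (a m i : ℕ)
    (hi : i ≤ b 0) :
    Nat.card {x : ℕ → ℕ // Pred k l b (a+1) a m x ∧ x 0 = i} =
      if i ≤ m ∧ m - i ≤ a then cnt k l (shiftB k l b i) (a - (m - i) + 1) (a - (m - i)) (m - i)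
      else 0 := by
  split_ifs with hc
  · obtain ⟨him, hma⟩ := hc
    exact Nat.card_congr
      { toFun := fun y => ⟨fun j => y.1 (j+1), by
          have := fwd_mem hl hb y.2.1
          rwa [y.2.2] at this⟩
        invFun := fun y => ⟨fun j => Nat.casesOn j i (fun j' => y.1 j'),
          bwd_mem hl hb hi him hma y.2, rfl⟩
        left_inv := fun y => Subtype.ext (funext fun j => by
          cases j with
          | zero => exact y.2.2.symm
          | succ j' => rfl)
        right_inv := fun y => Subtype.ext (funext fun j => rfl) }
  · rw [Nat.card_eq_zero]
    left
    constructor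
    intro y
    obtain ⟨hy, hy0⟩ := y.2
    have := mem_facts hy
    rw [hy0] at this
    exact hc ⟨this.1, this.2.2.2⟩

lemma cnt_rec {k l : ℕ} (hl : 2 ≤ l) {b : ℕ → ℕ} (hb : AdmB k l b) (a m : ℕ) :
    cnt k l b (a+1) a m = ∑ i ∈ Finset.range (b 0 + 1),
      if i ≤ m ∧ m - i ≤ a then cnt k l (shiftB k l b i) (a - (m - i) + 1) (a - (m - i)) (m - i)
      else 0 := by
  have hpart := card_partition (Pred k l b (a+1) a m) (pred_finite k l b (a+1) a m) (b 0 + 1)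
    (fun x hx => by
      have hb0 := hx.2.1 0 (by omega)
      rw [Finset.sum_range_one] at hb0
      omega)
  unfold cnt
  rw [hpart]
  exact Finset.sum_congr rfl fun i hi =>
    fiber_card hl hb a m i (Nat.lt_succ_iff.mp (Finset.mem_range.1 hi))
lemma cnt_stab (k l : ℕ) (b : ℕ → ℕ) {N a m : ℕ} (hN : a + 1 ≤ N) :
    cnt k l b N a m = cnt k l b (a+1) a m := by
  refine Nat.card_congr (Equiv.subtypeEquivRight ?_)
  intro x
  constructor
  · rintro ⟨hw, hbk, hs, h1, h2⟩
    have hsupp : ∀ j, a + 1 ≤ j → x j = 0 := by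
      intro j hj
      by_cases hjN : N ≤ j
      · exact hs j hjN
      · by_contra hne
        have hle : j ≤ j * x j := Nat.le_mul_of_pos_right j (Nat.pos_of_ne_zero hne)
        have : j * x j ≤ ∑ t ∈ Finset.range N, t * x t :=
          Finset.single_le_sum (f := fun t => t * x t) (fun t _ => Nat.zero_le _)
            (Finset.mem_range.2 (by omega))
        omega
    refine ⟨hw, hbk, hsupp, ?_, ?_⟩
    · exact (sum_cut (fun t u => t * u) (fun t => by ring) hsupp hN).symm.trans h1
    · exact (sum_cut (fun _ u => u) (fun _ => rfl) hsupp hN).symm.trans h2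
  · rintro ⟨hw, hbk, hs, h1, h2⟩
    refine ⟨hw, hbk, fun j hj => hs j (by omega), ?_, ?_⟩
    · exact (sum_cut (fun t u => t * u) (fun t => by ring) hs hN).trans h1
    · exact (sum_cut (fun _ u => u) (fun _ => rfl) hs hN).trans h2

lemma cnt_zero (k l : ℕ) (b : ℕ → ℕ) (a : ℕ) :
    cnt k l b (a+1) a 0 = if a = 0 then 1 else 0 := by
  have hall : ∀ x : ℕ → ℕ, Pred k l b (a+1) a 0 x → ∀ j, x j = 0 := by
    intro x hx j
    obtain ⟨hw, hbk, hs, h1, h2⟩ := hx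
    by_cases hj : j < a + 1
    · have h0 : ∀ t ∈ Finset.range (a+1), x t = 0 :=
        (Finset.sum_eq_zero_iff).1 h2
      exact h0 j (Finset.mem_range.2 hj)
    · exact hs j (by omega)
  split_ifs with ha
  · subst ha
    have hmem : Pred k l b 1 0 0 (fun _ => 0) := by
      refine ⟨fun j => by simp, fun i _ => by simp, fun i _ => rfl, by simp, by simp⟩
    haveI : Unique {x : ℕ → ℕ // Pred k l b 1 0 0 x} :=
      { default := ⟨fun _ => 0, hmem⟩
        uniq := fun y => Subtype.ext (funext fun j => hall y.1 y.2 j) }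
    exact Nat.card_unique
  · rw [cnt, Nat.card_eq_zero]
    left
    constructor
    intro y
    have hzero : ∀ j, y.1 j = 0 := hall y.1 y.2
    have h1 := y.2.2.2.2.1
    rw [Finset.sum_eq_zero (fun t _ => by rw [hzero t, Nat.mul_zero])] at h1
    exact ha h1.symm

lemma shiftB_adm {k l : ℕ} (hl : 2 ≤ l) {b : ℕ → ℕ} (hb : AdmB k l b) {i : ℕ} (hi : i ≤ b 0) :
    AdmB k l (shiftB k l b i) := by
  obtain ⟨hmono, hle⟩ := hb
  constructor
  · intro i' j' hij hjl
    simp only [shiftB]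
    by_cases hj : j' + 1 ≤ l - 2
    · rw [if_pos hj, if_pos (by omega)]
      exact Nat.sub_le_sub_right (hmono (i'+1) (j'+1) (by omega) (by omega)) i
    · rw [if_neg hj]
      by_cases hi' : i' + 1 ≤ l - 2
      · rw [if_pos hi']
        exact Nat.sub_le_sub_right (hle (i'+1) (by omega)) i
      · rw [if_neg hi']
  · intro j hjl
    simp only [shiftB]
    by_cases hj : j + 1 ≤ l - 2
    · rw [if_pos hj]
      exact le_trans (Nat.sub_le _ _) (hle (j+1) (by omega))
    · rw [if_neg hj]
      exact Nat.sub_le _ _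

lemma coeff_zpow_mul_Sop (g : PS) (i a m : ℕ) :
    MvPowerSeries.coeff (idx2 a m) (Zv ^ i * Sop g) =
      if i ≤ m ∧ m - i ≤ a then MvPowerSeries.coeff (idx2 (a - (m - i)) (m - i)) g
      else 0 := by
  rw [Zv, MvPowerSeries.X_pow_eq, MvPowerSeries.coeff_monomial_mul]
  by_cases him : i ≤ m
  · rw [if_pos (by rw [Finsupp.single_le_iff, idx2_apply1]; exact him), one_mul]
    have hsub : idx2 a m - Finsupp.single 1 i = idx2 a (m - i) := by
      ext t
      fin_cases t <;> simp [idx2, Finsupp.tsub_apply, Finsupp.single_apply]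
    rw [hsub]
    show (if (idx2 a (m-i)) 1 ≤ (idx2 a (m-i)) 0 then
      MvPowerSeries.coeff (idx2 ((idx2 a (m-i)) 0 - (idx2 a (m-i)) 1) ((idx2 a (m-i)) 1)) g
      else 0) = _
    rw [idx2_apply0, idx2_apply1]
    by_cases hma : m - i ≤ a
    · rw [if_pos hma, if_pos ⟨him, hma⟩]
    · rw [if_neg hma, if_neg (by tauto)]
  · rw [if_neg (by rw [Finsupp.single_le_iff, idx2_apply1]; exact him),
      if_neg (by tauto)]

lemma coeff_sum_rhs (k l : ℕ) (F : (ℕ → ℕ) → PS) (b : ℕ → ℕ) (a m : ℕ) :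
    MvPowerSeries.coeff (idx2 a m)
        (∑ i ∈ Finset.range (b 0 + 1), Zv ^ i * Sop (F (shiftB k l b i))) =
      ∑ i ∈ Finset.range (b 0 + 1),
        if i ≤ m ∧ m - i ≤ a then
          MvPowerSeries.coeff (idx2 (a - (m - i)) (m - i)) (F (shiftB k l b i))
        else 0 := by
  rw [map_sum]
  exact Finset.sum_congr rfl fun i _ => coeff_zpow_mul_Sop (F (shiftB k l b i)) i a m
lemma chiInf_rec {k l : ℕ} (hl : 2 ≤ l) {b : ℕ → ℕ} (hb : AdmB k l b) :
    chiInf k l b = ∑ i ∈ Finset.range (b 0 + 1), Zv ^ i * Sop (chiInf k l (shiftB k l b i)) := by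
  apply MvPowerSeries.ext
  intro e
  rw [← idx2_eta e]
  set a := e 0
  set m := e 1
  rw [coeff_sum_rhs k l (chiInf k l) b a m, chiInf_coeff, idx2_apply0, idx2_apply1,
    cnt_rec hl hb a m, Nat.cast_sum]
  refine Finset.sum_congr rfl ?_
  intro i _
  split_ifs with hc
  · rw [chiInf_coeff, idx2_apply0, idx2_apply1]
  · rw [Nat.cast_zero]

lemma chiInf_init (k l : ℕ) (b : ℕ → ℕ) (e : Fin 2 →₀ ℕ) (he : e 1 = 0) :
    MvPowerSeries.coeff e (chiInf k l b) = if e = 0 then 1 else 0 := by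
  rw [chiInf_coeff, he, cnt_zero]
  have hiff : e = 0 ↔ e 0 = 0 := by
    constructor
    · intro h; rw [h]; rfl
    · intro h
      ext t
      fin_cases t
      · exact h
      · exact he
  by_cases h0 : e 0 = 0
  · rw [if_pos h0, if_pos (hiff.2 h0), Nat.cast_one]
  · rw [if_neg h0, if_neg (fun h => h0 (hiff.1 h)), Nat.cast_zero]

lemma uniq_aux {k l : ℕ} (hl : 2 ≤ l) (F G : (ℕ → ℕ) → PS)
    (hFrec : ∀ b, AdmB k l b →
      F b = ∑ i ∈ Finset.range (b 0 + 1), Zv ^ i * Sop (F (shiftB k l b i)))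
    (hFini : ∀ b, AdmB k l b → ∀ e : Fin 2 →₀ ℕ, e 1 = 0 →
      MvPowerSeries.coeff e (F b) = if e = 0 then 1 else 0)
    (hGrec : ∀ b, AdmB k l b →
      G b = ∑ i ∈ Finset.range (b 0 + 1), Zv ^ i * Sop (G (shiftB k l b i)))
    (hGini : ∀ b, AdmB k l b → ∀ e : Fin 2 →₀ ℕ, e 1 = 0 →
      MvPowerSeries.coeff e (G b) = if e = 0 then 1 else 0) :
    ∀ m a b, AdmB k l b →
      MvPowerSeries.coeff (idx2 a m) (F b) = MvPowerSeries.coeff (idx2 a m) (G b) := by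
  intro m
  induction m using Nat.strong_induction_on with
  | _ m ihm =>
    intro a
    induction a using Nat.strong_induction_on with
    | _ a iha =>
      intro b hb
      rcases Nat.eq_zero_or_pos m with hm | hm
      · subst hm
        rw [hFini b hb (idx2 a 0) (idx2_apply1 a 0), hGini b hb (idx2 a 0) (idx2_apply1 a 0)]
      · rw [hFrec b hb, hGrec b hb, coeff_sum_rhs, coeff_sum_rhs]
        refine Finset.sum_congr rfl ?_
        intro i hi
        have hile : i ≤ b 0 := Nat.lt_succ_iff.mp (Finset.mem_range.1 hi)
        split_ifs with hc
        · obtain ⟨him, hma⟩ := hc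
          have hadm := shiftB_adm hl hb hile
          rcases Nat.eq_zero_or_pos i with h0 | h0
          · subst h0
            exact iha (a - (m - 0)) (by omega) (shiftB k l b 0) hadm
          · exact ihm (m - i) (by omega) (a - (m - i)) (shiftB k l b i) hadm
        · rfl

end

/-- The limits `χ^{(∞)}_{k,l;b}(q,z) = lim_{N→∞} χ^{(N)}_{k,l;b}(q,z)` exist
(coefficientwise) as formal power series, and `(χ^{(∞)}_{k,l;b})_b` is the unique
family of formal power series satisfying the difference equations
`χ^{(∞)}_{k,l;(b_0,…,b_{l-2})}(q,z) = Σ_{i=0}^{b_0} z^i χ^{(∞)}_{k,l;(b_1-i,…,b_{l-2}-i,k-i)}(q,qz)`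
together with the initial condition `χ^{(∞)}_{k,l;b}(q,0) = 1`. -/
theorem stmt4 (k l : ℕ) (hk : 0 < k) (hl : 2 ≤ l) :
    (∀ b, AdmB k l b → ∀ e : Fin 2 →₀ ℕ,
      Filter.Tendsto (fun N => MvPowerSeries.coeff e (chiN k l N b)) Filter.atTop
        (nhds (MvPowerSeries.coeff e (chiInf k l b)))) ∧
    ∀ F : (ℕ → ℕ) → PS,
      (((∀ b, AdmB k l b →
            F b = ∑ i ∈ Finset.range (b 0 + 1), Zv ^ i * Sop (F (shiftB k l b i))) ∧
        (∀ b, AdmB k l b → ∀ e : Fin 2 →₀ ℕ, e 1 = 0 →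
            MvPowerSeries.coeff e (F b) = if e = 0 then 1 else 0)) ↔
      (∀ b, AdmB k l b → F b = chiInf k l b)) := by
  
  constructor
  · intro b _ e
    apply tendsto_atTop_of_eventually_const (i₀ := e 0 + 1)
    intro N hN
    rw [chiN_coeff, chiInf_coeff, cnt_stab k l b hN]
  · intro F
    constructor
    · rintro ⟨hrec, hini⟩ b hb
      apply MvPowerSeries.ext
      intro e
      rw [← idx2_eta e]
      exact uniq_aux hl F (chiInf k l) hrec hini (fun b hb => chiInf_rec hl hb)
        (fun b _ e he => chiInf_init k l b e he) (e 1) (e 0) b hb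
    · intro hFeq
      refine ⟨?_, ?_⟩
      · intro b hb
        rw [hFeq b hb, chiInf_rec hl hb]
        refine Finset.sum_congr rfl ?_
        intro i hi
        rw [hFeq (shiftB k l b i) (shiftB_adm hl hb (Nat.lt_succ_iff.mp (Finset.mem_range.1 hi)))]
      · intro b hb e he
        rw [hFeq b hb]
        exact chiInf_init k l b e he
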